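/- In a descriptive general frame, ◇⁻¹ is a closed operator: for every closed set A (in the topology with the admissible sets as a clopen base), the set ◇⁻¹A = R(A) = {w : ∃v ∈ A, Rvw} is closed; i.e., ◇⁻¹A = ⋂{B ∈ 𝕎 : ◇⁻¹A ⊆ B}. -/

import Mathlib

/-- The diamond set operator: `◇A = {w : ∃v, R w v ∧ v ∈ A}`. -/
def diaOp {W : Type} (R : W → W → Prop) (A : Set W) : Set W := {w | ∃ v, R w v ∧ v ∈ A}

/-- The box set operator: `□A = {w : ∀v, R w v → v ∈ A}`. -/
def boxOp {W : Type} (R : W → W → Prop) (A : Set W) : Set W := {w | ∀ v, R w v → v ∈ A}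

/-- The inverse diamond set operator: `◇⁻¹A = {w : ∃v ∈ A, R v w} = R(A)`. -/
def idiaOp {W : Type} (R : W → W → Prop) (A : Set W) : Set W := {w | ∃ v, R v w ∧ v ∈ A}

/-- The inverse box set operator: `□⁻¹A = {w : ∀v, R v w → v ∈ A}`. -/
def iboxOp {W : Type} (R : W → W → Prop) (A : Set W) : Set W := {w | ∀ v, R v w → v ∈ A}
/-- A general frame: a Kripke frame together with a Boolean algebra of
admissible subsets closed under the diamond operator. -/
structure GenFrame (W : Type) where
  R : W → W → Prop
  adm : Set (Set W)
  univ_mem : Set.univ ∈ adm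
  compl_mem : ∀ X ∈ adm, Xᶜ ∈ adm
  inter_mem : ∀ X ∈ adm, ∀ Y ∈ adm, X ∩ Y ∈ adm
  dia_mem : ∀ X ∈ adm, diaOp R X ∈ adm

/-- The topology generated by the admissible sets as a base of clopen sets. -/
def GenFrame.top {W : Type} (F : GenFrame W) : TopologicalSpace W :=
  TopologicalSpace.generateFrom F.adm

/-- Differentiated: distinct points are separated by admissible sets. -/
def GenFrame.differentiated {W : Type} (F : GenFrame W) : Prop :=
  ∀ x y : W, x ≠ y → ∃ X ∈ F.adm, x ∈ X ∧ y ∉ X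

/-- Tight: `R x y` iff `x ∈ ◇Y` for every admissible `Y` containing `y`. -/
def GenFrame.tight {W : Type} (F : GenFrame W) : Prop :=
  ∀ x y : W, F.R x y ↔ ∀ Y ∈ F.adm, y ∈ Y → x ∈ diaOp F.R Y

/-- Compact: every family of admissible sets with the finite intersection
property has nonempty intersection. -/
def GenFrame.cpt {W : Type} (F : GenFrame W) : Prop :=
  ∀ C : Set (Set W), C ⊆ F.adm →
    (∀ D : Set (Set W), D ⊆ C → D.Finite → (⋂₀ D).Nonempty) →
    (⋂₀ C).Nonempty

/-- A descriptive frame is a differentiated, tight and compact general frame. -/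
def GenFrame.descriptive {W : Type} (F : GenFrame W) : Prop :=
  F.differentiated ∧ F.tight ∧ F.cpt


lemma GenFrame.sInter_mem {W : Type} (F : GenFrame W) {s : Set (Set W)} (hs : s.Finite)
    (h : s ⊆ F.adm) : ⋂₀ s ∈ F.adm := by
  refine Set.Finite.induction_on (motive := fun s _ => s ⊆ F.adm → ⋂₀ s ∈ F.adm) s hs
    (fun _ => by simpa using F.univ_mem) ?_ h
  intro a s _ _ ih hsub
  rw [Set.sInter_insert]
  exact F.inter_mem _ (hsub (Set.mem_insert _ _)) _
    (ih fun x hx => hsub (Set.mem_insert_of_mem _ hx))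

lemma GenFrame.adm_isClosed {W : Type} (F : GenFrame W) {X : Set W} (hX : X ∈ F.adm) :
    @IsClosed W F.top X := by
  letI := F.top
  exact ⟨TopologicalSpace.GenerateOpen.basic _ (F.compl_mem _ hX)⟩

lemma GenFrame.closed_eq {W : Type} (F : GenFrame W) {A : Set W} (hA : @IsClosed W F.top A) :
    A = ⋂₀ {X | X ∈ F.adm ∧ A ⊆ X} := by
  letI := F.top
  apply Set.Subset.antisymm
  · exact fun w hw X hX => hX.2 hw
  · intro w hw
    by_contra hwA
    have hbasis := TopologicalSpace.isTopologicalBasis_of_subbasis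
      (rfl : F.top = TopologicalSpace.generateFrom F.adm)
    obtain ⟨U, hU, hwU, hUA⟩ := hbasis.exists_subset_of_mem_open hwA hA.isOpen_compl
    obtain ⟨f, ⟨hfin, hsub⟩, rfl⟩ := hU
    have hUadm : ⋂₀ f ∈ F.adm := F.sInter_mem hfin hsub
    have hsubc : A ⊆ (⋂₀ f)ᶜ := fun x hx hxU => hUA hxU hx
    exact hw ((⋂₀ f)ᶜ) ⟨F.compl_mem _ hUadm, hsubc⟩ hwU

/-- In a descriptive frame, `◇⁻¹` is a closed operator: the image of a closed
set is closed, i.e. it equals the intersection of its admissible supersets. -/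
theorem idiaOp_closed {W : Type} (F : GenFrame W) (hF : F.descriptive)
    (A : Set W) (hA : @IsClosed W F.top A) :
    @IsClosed W F.top (idiaOp F.R A) ∧
    idiaOp F.R A = ⋂₀ {B | B ∈ F.adm ∧ idiaOp F.R A ⊆ B} := by
  classical
  obtain ⟨_, htight, hcpt⟩ := hF
  have key : idiaOp F.R A = ⋂₀ {B | B ∈ F.adm ∧ idiaOp F.R A ⊆ B} := by
    apply Set.Subset.antisymm
    · exact fun w hw B hB => hB.2 hw
    · intro w hw
      set C : Set (Set W) :=
        {X | X ∈ F.adm ∧ A ⊆ X} ∪ {Z | ∃ Y, Y ∈ F.adm ∧ w ∈ Y ∧ Z = diaOp F.R Y} with hCdef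
      have hCadm : C ⊆ F.adm := by
        rintro Z (⟨hZ, _⟩ | ⟨Y, hY, _, rfl⟩)
        · exact hZ
        · exact F.dia_mem _ hY
      have hfip : ∀ D : Set (Set W), D ⊆ C → D.Finite → (⋂₀ D).Nonempty := by
        intro D hDC hDfin
        set D2 : Set (Set W) := {Z ∈ D | ∃ Y, Y ∈ F.adm ∧ w ∈ Y ∧ Z = diaOp F.R Y} with hD2def
        have hD2' : ∀ Z : Set W, ∃ Y, Y ∈ F.adm ∧ (Z ∈ D2 → (w ∈ Y ∧ Z = diaOp F.R Y)) := by
          intro Z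
          by_cases h : Z ∈ D2
          · obtain ⟨Y, h1, h2, h3⟩ := h.2
            exact ⟨Y, h1, fun _ => ⟨h2, h3⟩⟩
          · exact ⟨Set.univ, F.univ_mem, fun hZ => absurd hZ h⟩
        choose g hg1 hg2 using hD2'
        set Y0 : Set W := ⋂₀ insert Set.univ (g '' D2) with hY0def
        have hY0fin : (insert Set.univ (g '' D2) : Set (Set W)).Finite :=
          ((hDfin.subset (Set.sep_subset _ _)).image g).insert _
        have hY0sub : insert Set.univ (g '' D2) ⊆ F.adm := by
          rintro X (rfl | ⟨Z, _, rfl⟩)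
          · exact F.univ_mem
          · exact hg1 Z
        have hY0adm : Y0 ∈ F.adm := F.sInter_mem hY0fin hY0sub
        have hwY0 : w ∈ Y0 := by
          rintro X (rfl | ⟨Z, hZ, rfl⟩)
          · trivial
          · exact (hg2 Z hZ).1
        have hne : (idiaOp F.R A ∩ Y0).Nonempty := by
          rw [Set.nonempty_iff_ne_empty]
          intro hemp
          have hsubc : idiaOp F.R A ⊆ Y0ᶜ := by
            intro x hx hxY
            exact Set.eq_empty_iff_forall_notMem.mp hemp x ⟨hx, hxY⟩
          exact hw (Y0ᶜ) ⟨F.compl_mem _ hY0adm, hsubc⟩ hwY0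
        obtain ⟨y, ⟨v, hRvy, hvA⟩, hyY0⟩ := hne
        refine ⟨v, fun Z hZD => ?_⟩
        rcases hDC hZD with ⟨_, hAZ⟩ | hex
        · exact hAZ hvA
        · have hZ2 : Z ∈ D2 := ⟨hZD, hex⟩
          rw [(hg2 Z hZ2).2]
          exact ⟨y, hRvy, hyY0 (g Z) (Set.mem_insert_of_mem _ ⟨Z, hZ2, rfl⟩)⟩
      obtain ⟨v, hv⟩ := hcpt C hCadm hfip
      have hvA : v ∈ A := by
        rw [F.closed_eq hA]
        exact fun X hX => hv X (Or.inl hX)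
      have hRvw : F.R v w := by
        rw [htight v w]
        intro Y hY hwY
        exact hv (diaOp F.R Y) (Or.inr ⟨Y, hY, hwY, rfl⟩)
      exact ⟨v, hRvw, hvA⟩
  refine ⟨?_, key⟩
  rw [key]
  letI := F.top
  exact isClosed_sInter fun B hB => F.adm_isClosed hB.1
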